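/- Let ψ : [0,1]² → ℝ² be the affine map ψ(x,y) = (5π/8, −7π/8) + x·(π/4, π/4) + y·(−π/2, π/2). Every continuous function g : ℝ² → ℂ satisfying |g(p) − φ(p)| < 0.025 for all p ∈ ψ([0,1]²) has a zero in ψ([0,1]²), i.e., there exists (x₀,y₀) ∈ [0,1]² with g(ψ(x₀,y₀)) = 0. -/

import Mathlib

open Real

/-- The function `φ(x,y) = (1/3)(e^{ix} + e^{iy} + e^{i(x+y)})`. -/
noncomputable def phi : ℝ × ℝ → ℂ := fun p =>
  (1 / 3) * (Complex.exp (Complex.I * p.1) + Complex.exp (Complex.I * p.2) +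
    Complex.exp (Complex.I * (p.1 + p.2)))

/-- The affine map `ψ(x,y) = (5π/8, −7π/8) + x·(π/4, π/4) + y·(−π/2, π/2)`. -/
noncomputable def psi : ℝ × ℝ → ℝ × ℝ := fun p =>
  (5 * π / 8 + p.1 * (π / 4) + p.2 * (-(π / 2)),
   -(7 * π / 8) + p.1 * (π / 4) + p.2 * (π / 2))


private lemma sinL1 (e : ℤ) (x : ℝ) (h1 : 2*(e:ℝ)*π ≤ x) (h2 : x ≤ 2*(e:ℝ)*π + π) :
    0 ≤ Real.sin x := by
  have := Real.sin_add_int_mul_two_pi (x - 2*(e:ℝ)*π) e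
  have hx : x - 2*(e:ℝ)*π + (e:ℝ) * (2*π) = x := by ring
  rw [hx] at this
  rw [this]
  exact Real.sin_nonneg_of_nonneg_of_le_pi (by linarith) (by linarith)

private lemma pin (e : ℤ) (t : ℝ) (h1 : 2*(e:ℝ)*π - π/2 < t) (h2 : t < 2*(e:ℝ)*π + π/2)
    (ht : Real.sin t < 0) : 2*(e:ℝ)*π - π < t ∧ t < 2*(e:ℝ)*π := by
  have hpi := Real.pi_pos
  constructor
  · linarith
  · by_contra hle
    push_neg at hle
    exact absurd (sinL1 e t hle (by linarith)) (by linarith)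

private lemma trap_step (e : ℤ) (s t : ℝ)
    (hs : 2*(e:ℝ)*π - π < s ∧ s < 2*(e:ℝ)*π) (hd : |t - s| < π/2)
    (ht : Real.sin t < 0) : 2*(e:ℝ)*π - π < t ∧ t < 2*(e:ℝ)*π := by
  have hpi := Real.pi_pos
  rw [abs_lt] at hd
  constructor
  · by_contra hle
    push_neg at hle
    have h1 : 2*((e:ℝ)-1)*π ≤ t := by linarith
    have h2 : t ≤ 2*((e:ℝ)-1)*π + π := by linarith
    have : 0 ≤ Real.sin t := by
      have := sinL1 (e-1) t (by push_cast; linarith) (by push_cast; linarith)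
      exact this
    linarith
  · by_contra hle
    push_neg at hle
    exact absurd (sinL1 e t hle (by linarith)) (by linarith)

private lemma trap (n : ℕ) (t : ℕ → ℝ) (e : ℤ)
    (hstep : ∀ k < n, |t (k+1) - t k| < π/2)
    (hsin : ∀ k ≤ n, Real.sin (t k) < 0)
    (h0 : 2*(e:ℝ)*π - π < t 0 ∧ t 0 < 2*(e:ℝ)*π) :
    ∀ k ≤ n, 2*(e:ℝ)*π - π < t k ∧ t k < 2*(e:ℝ)*π := by
  intro k hk
  induction k with
  | zero => exact h0
  | succ m ih =>
    exact trap_step e (t m) (t (m+1)) (ih (by omega)) (hstep m (by omega)) (hsin (m+1) hk)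

private lemma init_trap (x : ℝ) (hx : Real.sin x < 0) :
    ∃ e : ℤ, 2*(e:ℝ)*π - π < x ∧ x < 2*(e:ℝ)*π := by
  have hpi := Real.pi_pos
  refine ⟨⌈x / (2*π)⌉, ?_, ?_⟩
  · by_contra hle
    push_neg at hle
    have h2 : x ≤ 2*(⌈x / (2*π)⌉:ℝ)*π := by
      have := Int.le_ceil (x / (2*π))
      have h2pi : (0:ℝ) < 2*π := by linarith
      rw [div_le_iff₀ h2pi] at this
      linarith
    have h1 : 2*((⌈x / (2*π)⌉:ℝ)-1)*π ≤ x := by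
      have hc := Int.ceil_lt_add_one (x / (2*π))
      have h2pi : (0:ℝ) < 2*π := by linarith
      have : ((⌈x / (2*π)⌉:ℝ) - 1) * (2*π) < x := by
        have := (lt_div_iff₀ h2pi).mp (by linarith : (⌈x / (2*π)⌉:ℝ) - 1 < x / (2*π))
        linarith
      linarith
    have := sinL1 (⌈x / (2*π)⌉ - 1) x (by push_cast; linarith) (by push_cast; linarith)
    linarith
  · have h2 : x ≤ 2*(⌈x / (2*π)⌉:ℝ)*π := by
      have := Int.le_ceil (x / (2*π))
      have h2pi : (0:ℝ) < 2*π := by linarith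
      rw [div_le_iff₀ h2pi] at this
      linarith
    rcases lt_or_eq_of_le h2 with h | h
    · exact h
    · exfalso
      have : Real.sin x = 0 := by
        rw [h]
        have := Real.sin_add_int_mul_two_pi 0 ⌈x / (2*π)⌉
        simpa [show (0:ℝ) + (⌈x / (2*π)⌉:ℝ)*(2*π) = 2*(⌈x / (2*π)⌉:ℝ)*π by ring] using this
      linarith


private lemma ratio_re_pos {z w : ℂ} (hw : w ≠ 0) (h : ‖z - w‖ < ‖w‖) :
    0 < (z / w).re := by
  have hwpos : 0 < ‖w‖ := norm_pos_iff.mpr hw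
  have habs : ‖z/w - 1‖ < 1 := by
    have heq : z/w - 1 = (z - w)/w := by field_simp
    rw [heq, norm_div, div_lt_one hwpos]
    exact h
  have hre : |(z/w - 1).re| ≤ ‖z/w - 1‖ := Complex.abs_re_le_norm _
  have heq2 : (z/w - 1).re = (z/w).re - 1 := by simp
  rw [heq2] at hre
  have := abs_le.mp hre
  linarith

private lemma arg_small {z w : ℂ} (hw : w ≠ 0) (h : ‖z - w‖ < ‖w‖) :
    |Complex.arg (z / w)| < π / 2 :=
  Complex.abs_arg_lt_pi_div_two_iff.mpr (Or.inl (ratio_re_pos hw h))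

private lemma lift_step {z w : ℂ} (θ : ℝ) (hw : w ≠ 0) (hz : z ≠ 0)
    (h : w = (‖w‖ : ℂ) * Complex.exp (θ * Complex.I)) :
    z = (‖z‖ : ℂ) * Complex.exp (((θ + Complex.arg (z / w) : ℝ) : ℂ) * Complex.I) := by
  have key := Complex.norm_mul_exp_arg_mul_I (z / w)
  have hmul : ‖z/w‖ * ‖w‖ = ‖z‖ := by
    rw [← norm_mul]
    congr 1
    field_simp
  calc z = (z/w) * w := (div_mul_cancel₀ z hw).symm
    _ = ((‖z/w‖ : ℂ) * Complex.exp (↑(Complex.arg (z/w)) * Complex.I))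
        * ((‖w‖ : ℂ) * Complex.exp (↑θ * Complex.I)) := by rw [key, ← h]
    _ = ((‖z/w‖ * ‖w‖ : ℝ) : ℂ)
        * (Complex.exp (↑θ * Complex.I) * Complex.exp (↑(Complex.arg (z/w)) * Complex.I)) := by
          push_cast; ring
    _ = (‖z‖ : ℂ) * Complex.exp (((θ + Complex.arg (z / w) : ℝ) : ℂ) * Complex.I) := by
          rw [hmul, ← Complex.exp_add]
          congr 2
          push_cast; ring

private lemma cocycle {z1 z2 z3 z4 : ℂ} (h1 : z1 ≠ 0) (h2 : z2 ≠ 0) (h3 : z3 ≠ 0) (h4 : z4 ≠ 0)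
    (a12 : |Complex.arg (z2/z1)| < π/2) (a23 : |Complex.arg (z3/z2)| < π/2)
    (a14 : |Complex.arg (z4/z1)| < π/2) (a43 : |Complex.arg (z3/z4)| < π/2) :
    Complex.arg (z2/z1) + Complex.arg (z3/z2) = Complex.arg (z4/z1) + Complex.arg (z3/z4) := by
  have hpi := Real.pi_pos
  set S : ℝ := Complex.arg (z2/z1) + Complex.arg (z3/z2) - Complex.arg (z4/z1) - Complex.arg (z3/z4) with hS
  have hq : (z2/z1) * (z3/z2) = z3/z1 := by field_simp
  have hq' : (z4/z1) * (z3/z4) = z3/z1 := by field_simp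
  have e12 := Complex.norm_mul_exp_arg_mul_I (z2/z1)
  have e23 := Complex.norm_mul_exp_arg_mul_I (z3/z2)
  have e14 := Complex.norm_mul_exp_arg_mul_I (z4/z1)
  have e43 := Complex.norm_mul_exp_arg_mul_I (z3/z4)
  have E1 : ((‖z3/z1‖):ℂ) * (Complex.exp (↑(Complex.arg (z2/z1)) * Complex.I) * Complex.exp (↑(Complex.arg (z3/z2)) * Complex.I)) = z3/z1 := by
    calc ((‖z3/z1‖):ℂ) * (Complex.exp (↑(Complex.arg (z2/z1)) * Complex.I) * Complex.exp (↑(Complex.arg (z3/z2)) * Complex.I))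
        = ((‖z2/z1‖ * ‖z3/z2‖ : ℝ) : ℂ) * (Complex.exp (↑(Complex.arg (z2/z1)) * Complex.I) * Complex.exp (↑(Complex.arg (z3/z2)) * Complex.I)) := by
          rw [show ‖z3/z1‖ = ‖z2/z1‖ * ‖z3/z2‖ by rw [← norm_mul, hq]]
      _ = (((‖z2/z1‖):ℂ) * Complex.exp (↑(Complex.arg (z2/z1)) * Complex.I)) * (((‖z3/z2‖):ℂ) * Complex.exp (↑(Complex.arg (z3/z2)) * Complex.I)) := by
          push_cast; ring
      _ = (z2/z1) * (z3/z2) := by rw [e12, e23]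
      _ = z3/z1 := hq
  have E2 : ((‖z3/z1‖):ℂ) * (Complex.exp (↑(Complex.arg (z4/z1)) * Complex.I) * Complex.exp (↑(Complex.arg (z3/z4)) * Complex.I)) = z3/z1 := by
    calc ((‖z3/z1‖):ℂ) * (Complex.exp (↑(Complex.arg (z4/z1)) * Complex.I) * Complex.exp (↑(Complex.arg (z3/z4)) * Complex.I))
        = ((‖z4/z1‖ * ‖z3/z4‖ : ℝ) : ℂ) * (Complex.exp (↑(Complex.arg (z4/z1)) * Complex.I) * Complex.exp (↑(Complex.arg (z3/z4)) * Complex.I)) := by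
          rw [show ‖z3/z1‖ = ‖z4/z1‖ * ‖z3/z4‖ by rw [← norm_mul, hq']]
      _ = (((‖z4/z1‖):ℂ) * Complex.exp (↑(Complex.arg (z4/z1)) * Complex.I)) * (((‖z3/z4‖):ℂ) * Complex.exp (↑(Complex.arg (z3/z4)) * Complex.I)) := by
          push_cast; ring
      _ = (z4/z1) * (z3/z4) := by rw [e14, e43]
      _ = z3/z1 := hq'
  have habs3 : ((‖z3/z1‖):ℂ) ≠ 0 := by
    simpa using norm_ne_zero_iff.mpr (div_ne_zero h3 h1)
  have Eeq : Complex.exp (↑(Complex.arg (z2/z1)) * Complex.I) * Complex.exp (↑(Complex.arg (z3/z2)) * Complex.I)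
      = Complex.exp (↑(Complex.arg (z4/z1)) * Complex.I) * Complex.exp (↑(Complex.arg (z3/z4)) * Complex.I) :=
    mul_left_cancel₀ habs3 (E1.trans E2.symm)
  have hexpS : Complex.exp ((S:ℝ) * Complex.I) = 1 := by
    have hSe : ((S:ℝ):ℂ) * Complex.I = (↑(Complex.arg (z2/z1)) * Complex.I + ↑(Complex.arg (z3/z2)) * Complex.I) - (↑(Complex.arg (z4/z1)) * Complex.I + ↑(Complex.arg (z3/z4)) * Complex.I) := by
      rw [hS]; push_cast; ring
    rw [hSe, Complex.exp_sub, Complex.exp_add, Complex.exp_add, Eeq, div_self]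
    exact mul_ne_zero (Complex.exp_ne_zero _) (Complex.exp_ne_zero _)
  obtain ⟨k, hk⟩ := Complex.exp_eq_one_iff.mp hexpS
  have hk' : ((S:ℝ):ℂ) = (k:ℂ) * (2 * (π:ℂ)) := by
    have hI : (Complex.I : ℂ) ≠ 0 := Complex.I_ne_zero
    have : ((S:ℝ):ℂ) * Complex.I = ((k:ℂ) * (2 * (π:ℂ))) * Complex.I := by
      rw [hk]; ring
    exact mul_right_cancel₀ hI this
  have hSr : S = (k:ℝ) * (2 * π) := by exact_mod_cast hk'
  have b12 := abs_lt.mp a12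
  have b23 := abs_lt.mp a23
  have b14 := abs_lt.mp a14
  have b43 := abs_lt.mp a43
  have habsS : |S| < 2 * π := by
    rw [abs_lt]
    constructor <;> (rw [hS]) <;> linarith
  have hk0 : k = 0 := by
    by_contra hk0
    have h1k : (1:ℝ) ≤ |(k:ℝ)| := by exact_mod_cast Int.one_le_abs (by exact_mod_cast hk0)
    rw [hSr, abs_mul, abs_of_pos (by linarith : (0:ℝ) < 2*π)] at habsS
    nlinarith
  rw [hk0] at hSr
  simp at hSr
  rw [hS] at hSr
  linarith


private noncomputable def gridP (n i j : ℕ) : ℝ × ℝ := ((i:ℝ)/n, (j:ℝ)/n)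

private noncomputable def AA (F : ℝ×ℝ → ℂ) (n i j : ℕ) : ℝ :=
  Complex.arg (F (gridP n (i+1) j) / F (gridP n i j))

private noncomputable def BB (F : ℝ×ℝ → ℂ) (n i j : ℕ) : ℝ :=
  Complex.arg (F (gridP n i (j+1)) / F (gridP n i j))

private noncomputable def TH (F : ℝ×ℝ → ℂ) (n i j : ℕ) : ℝ :=
  (F (gridP n 0 0)).arg + (∑ k ∈ Finset.range i, AA F n k 0) + ∑ k ∈ Finset.range j, BB F n i k

private lemma TH_vert (F : ℝ×ℝ → ℂ) (n i j : ℕ) : TH F n i (j+1) = TH F n i j + BB F n i j := by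
  simp [TH, Finset.sum_range_succ]; ring

private lemma TH_bot (F : ℝ×ℝ → ℂ) (n i : ℕ) : TH F n (i+1) 0 = TH F n i 0 + AA F n i 0 := by
  simp [TH, Finset.sum_range_succ]; ring

private lemma TH_zero (F : ℝ×ℝ → ℂ) (n : ℕ) : TH F n 0 0 = (F (gridP n 0 0)).arg := by
  simp [TH]

set_option maxHeartbeats 1000000 in
private lemma miranda (F : ℝ × ℝ → ℂ)
    (hF : ContinuousOn F (Set.Icc (0:ℝ) 1 ×ˢ Set.Icc (0:ℝ) 1))
    (h0 : ∀ p ∈ Set.Icc (0:ℝ) 1 ×ˢ Set.Icc (0:ℝ) 1, F p ≠ 0)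
    (hbot : ∀ x ∈ Set.Icc (0:ℝ) 1, (F (x,0)).re < 0)
    (htop : ∀ x ∈ Set.Icc (0:ℝ) 1, 0 < (F (x,1)).re)
    (hleft : ∀ y ∈ Set.Icc (0:ℝ) 1, (F (0,y)).im < 0)
    (hright : ∀ y ∈ Set.Icc (0:ℝ) 1, 0 < (F (1,y)).im) : False := by
  have hpi := Real.pi_pos
  set K : Set (ℝ × ℝ) := Set.Icc (0:ℝ) 1 ×ˢ Set.Icc (0:ℝ) 1 with hK
  have hKc : IsCompact K := (isCompact_Icc).prod isCompact_Icc
  have hKne : K.Nonempty := ⟨(0,0), by constructor <;> simp⟩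
  obtain ⟨p₀, hp₀K, hp₀min'⟩ := hKc.exists_isMinOn hKne
    (continuous_norm.comp_continuousOn hF)
  have hp₀min : ∀ q ∈ K, ‖F p₀‖ ≤ ‖F q‖ := fun q hq => hp₀min' hq
  set m : ℝ := ‖F p₀‖ with hm
  have hmpos : 0 < m := norm_pos_iff.mpr (h0 p₀ hp₀K)
  have hu := hKc.uniformContinuousOn_of_continuous hF
  rw [Metric.uniformContinuousOn_iff] at hu
  obtain ⟨δ, hδpos, hδ⟩ := hu m hmpos
  clear_value m
  obtain ⟨n, hn', hnp⟩ : ∃ n : ℕ, 1/δ < (n:ℝ) ∧ 0 < n := by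
    obtain ⟨n', hn'⟩ := exists_nat_gt (1/δ)
    exact ⟨n' + 1, by push_cast; linarith, by omega⟩
  have hnpos : (0:ℝ) < n := by exact_mod_cast hnp
  have h1n : 1/(n:ℝ) < δ := by
    rw [div_lt_iff₀ hnpos]
    have h3 := (div_lt_iff₀ hδpos).mp hn'
    linarith [mul_comm δ (n:ℝ)]
  have hPK : ∀ i j : ℕ, i ≤ n → j ≤ n → gridP n i j ∈ K := by
    intro i j hi hj
    simp only [hK, gridP, Set.mem_prod, Set.mem_Icc]
    refine ⟨⟨by positivity, ?_⟩, by positivity, ?_⟩ <;> rw [div_le_one hnpos]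
    · exact_mod_cast hi
    · exact_mod_cast hj
  clear_value K
  have hdistH : ∀ i j : ℕ, dist (gridP n (i+1) j) (gridP n i j) < δ := by
    intro i j
    rw [Prod.dist_eq]
    simp only [gridP]
    have h1 : dist (((i+1:ℕ):ℝ)/n) ((i:ℝ)/n) = 1/(n:ℝ) := by
      rw [Real.dist_eq]
      push_cast
      rw [show ((i:ℝ)+1)/n - (i:ℝ)/n = 1/(n:ℝ) by field_simp; ring]
      rw [abs_of_pos (by positivity)]
    rw [h1, dist_self]
    simpa using h1n
  have hdistV : ∀ i j : ℕ, dist (gridP n i (j+1)) (gridP n i j) < δ := by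
    intro i j
    rw [Prod.dist_eq]
    simp only [gridP]
    have h1 : dist (((j+1:ℕ):ℝ)/n) ((j:ℝ)/n) = 1/(n:ℝ) := by
      rw [Real.dist_eq]
      push_cast
      rw [show ((j:ℝ)+1)/n - (j:ℝ)/n = 1/(n:ℝ) by field_simp; ring]
      rw [abs_of_pos (by positivity)]
    rw [h1, dist_self]
    simpa using h1n
  -- ratio small-arg fact
  have hrat : ∀ p ∈ K, ∀ q ∈ K, dist q p < δ → |Complex.arg (F q / F p)| < π/2 := by
    intro p hp q hq hd
    apply arg_small (h0 p hp)
    calc ‖F q - F p‖ = dist (F q) (F p) := (Complex.dist_eq _ _).symm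
      _ < m := hδ q hq p hp hd
      _ ≤ ‖F p‖ := hp₀min p hp
  have hA : ∀ i j : ℕ, i < n → j ≤ n → |AA F n i j| < π/2 := fun i j hi hj =>
    hrat _ (hPK i j (le_of_lt hi) hj) _ (hPK (i+1) j hi hj) (hdistH i j)
  have hB : ∀ i j : ℕ, i ≤ n → j < n → |BB F n i j| < π/2 := fun i j hi hj =>
    hrat _ (hPK i j hi (le_of_lt hj)) _ (hPK i (j+1) hi hj) (hdistV i j)
  -- cocycle
  have hco : ∀ i j : ℕ, i < n → j < n →
      AA F n i j + BB F n (i+1) j = BB F n i j + AA F n i (j+1) := by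
    intro i j hi hj
    have h1 := h0 _ (hPK i j (le_of_lt hi) (le_of_lt hj))
    have h2 := h0 _ (hPK (i+1) j hi (le_of_lt hj))
    have h3 := h0 _ (hPK (i+1) (j+1) hi hj)
    have h4 := h0 _ (hPK i (j+1) (le_of_lt hi) hj)
    have := cocycle h1 h2 h3 h4 (hA i j hi (le_of_lt hj)) (hB (i+1) j hi hj)
      (hB i j (le_of_lt hi) hj) (hA i (j+1) hi hj)
    simpa only [AA, BB] using this
  -- horizontal recurrence at every row
  have hTHh : ∀ j ≤ n, ∀ i < n, TH F n (i+1) j = TH F n i j + AA F n i j := by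
    intro j hj
    induction j with
    | zero => intro i _; exact TH_bot F n i
    | succ k ih =>
      intro i hi
      have hk : k < n := by omega
      rw [TH_vert, TH_vert, ih (by omega) i hi]
      have := hco i k hi hk
      linarith
  -- the lift invariant
  have hInv0 : ∀ i ≤ n, F (gridP n i 0) =
      (‖F (gridP n i 0)‖ : ℂ) * Complex.exp ((TH F n i 0) * Complex.I) := by
    intro i hi
    induction i with
    | zero => rw [TH_zero]; exact (Complex.norm_mul_exp_arg_mul_I _).symm
    | succ k ih =>
      have hk : k < n := by omega
      rw [TH_bot]
      simp only [AA]
      exact lift_step _ (h0 _ (hPK k 0 (le_of_lt hk) (by omega)))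
        (h0 _ (hPK (k+1) 0 hk (by omega))) (ih (by omega))
  have hInv : ∀ j ≤ n, ∀ i ≤ n, F (gridP n i j) =
      (‖F (gridP n i j)‖ : ℂ) * Complex.exp ((TH F n i j) * Complex.I) := by
    intro j hj
    induction j with
    | zero => exact fun i hi => hInv0 i hi
    | succ k ih =>
      intro i hi
      have hk : k < n := by omega
      rw [TH_vert]
      simp only [BB]
      exact lift_step _ (h0 _ (hPK i k hi (le_of_lt hk)))
        (h0 _ (hPK i (k+1) hi hk)) (ih (by omega) i hi)
  -- sign transfer: cos/sin of TH
  have hcos : ∀ i ≤ n, ∀ j ≤ n, (F (gridP n i j)).re = ‖F (gridP n i j)‖ * Real.cos (TH F n i j) := by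
    intro i hi j hj
    conv_lhs => rw [hInv j hj i hi]
    rw [Complex.re_ofReal_mul, Complex.exp_ofReal_mul_I_re]
  have hsin : ∀ i ≤ n, ∀ j ≤ n, (F (gridP n i j)).im = ‖F (gridP n i j)‖ * Real.sin (TH F n i j) := by
    intro i hi j hj
    conv_lhs => rw [hInv j hj i hi]
    rw [Complex.im_ofReal_mul, Complex.exp_ofReal_mul_I_im]
  have habspos : ∀ i ≤ n, ∀ j ≤ n, 0 < ‖F (gridP n i j)‖ := fun i hi j hj =>
    norm_pos_iff.mpr (h0 _ (hPK i j hi hj))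
  -- coordinates of edge grid points
  have hx0 : ((0:ℕ):ℝ)/n = 0 := by simp
  have hx1 : ((n:ℕ):ℝ)/n = 1 := by
    rw [div_eq_one_iff_eq (ne_of_gt hnpos)]
  have hmemI : ∀ i : ℕ, i ≤ n → ((i:ℝ)/n) ∈ Set.Icc (0:ℝ) 1 := by
    intro i hi
    exact ⟨by positivity, by rw [div_le_one hnpos]; exact_mod_cast hi⟩
  -- edge sign conditions in terms of sin
  have hsinb : ∀ k ≤ n, Real.sin (TH F n k 0 + π/2) < 0 := by
    intro k hk
    rw [Real.sin_add_pi_div_two]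
    have h1 : (F (gridP n k 0)).re < 0 := by
      have := hbot ((k:ℝ)/n) (hmemI k hk)
      simpa [gridP, hx0] using this
    rw [hcos k hk 0 (by omega)] at h1
    nlinarith [habspos k hk 0 (by omega)]
  have hsinr : ∀ j ≤ n, Real.sin (TH F n n j + π) < 0 := by
    intro j hj
    rw [Real.sin_add_pi]
    have h1 : 0 < (F (gridP n n j)).im := by
      have := hright ((j:ℝ)/n) (hmemI j hj)
      simpa [gridP, hx1] using this
    rw [hsin n (le_refl n) j hj] at h1
    nlinarith [habspos n (le_refl n) j hj]
  have hsint : ∀ k ≤ n, Real.sin (TH F n k n - π/2) < 0 := by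
    intro k hk
    rw [Real.sin_sub_pi_div_two]
    have h1 : 0 < (F (gridP n k n)).re := by
      have := htop ((k:ℝ)/n) (hmemI k hk)
      simpa [gridP, hx1] using this
    rw [hcos k hk n (le_refl n)] at h1
    nlinarith [habspos k hk n (le_refl n)]
  have hsinl : ∀ j ≤ n, Real.sin (TH F n 0 j) < 0 := by
    intro j hj
    have h1 : (F (gridP n 0 j)).im < 0 := by
      have := hleft ((j:ℝ)/n) (hmemI j hj)
      simpa [gridP, hx0] using this
    rw [hsin 0 (by omega) j hj] at h1
    nlinarith [habspos 0 (by omega) j hj]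
  -- BOTTOM trap
  obtain ⟨a, ha⟩ := init_trap (TH F n 0 0 + π/2) (hsinb 0 (by omega))
  have hbotT := trap n (fun k => TH F n k 0 + π/2) a
    (by
      intro k hk
      have := hTHh 0 (by omega) k hk
      rw [this, show TH F n k 0 + AA F n k 0 + π/2 - (TH F n k 0 + π/2) = AA F n k 0 by ring]
      exact hA k 0 hk (by omega))
    (fun k hk => hsinb k hk) ha
  -- corner (n,0) and RIGHT trap
  have hb' := hbotT n (le_refl n)
  have hc1 := pin a (TH F n n 0 + π)
    (by linarith [hb'.1])
    (by linarith [hb'.2])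
    (hsinr 0 (by omega))
  have hrightT := trap n (fun j => TH F n n j + π) a
    (by
      intro k hk
      rw [TH_vert, show TH F n n k + BB F n n k + π - (TH F n n k + π) = BB F n n k by ring]
      exact hB n k (le_refl n) hk)
    (fun j hj => hsinr j hj) hc1
  -- corner (n,n) and TOP trap (backwards)
  have hc2' := hrightT n (le_refl n)
  have hc2 := pin (a-1) (TH F n n n - π/2)
    (by push_cast; linarith [hc2'.1])
    (by push_cast; linarith [hc2'.2])
    (hsint n (le_refl n))
  have htopT := trap n (fun k => TH F n (n-k) n - π/2) (a-1)
    (by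
      intro k hk
      have h2 : TH F n (n-k) n = TH F n (n-(k+1)) n + AA F n (n-(k+1)) n := by
        rw [show n - k = (n - (k+1)) + 1 by omega]
        exact hTHh n (le_refl n) (n-(k+1)) (by omega)
      rw [h2, show TH F n (n-(k+1)) n - π/2 - (TH F n (n-(k+1)) n + AA F n (n-(k+1)) n - π/2)
        = -(AA F n (n-(k+1)) n) by ring, abs_neg]
      exact hA (n-(k+1)) n (by omega) (le_refl n))
    (fun k hk => hsint (n-k) (by omega))
    (by simpa using hc2)
  -- corner (0,n) and LEFT trap (backwards)
  have hc3' := htopT n (le_refl n)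
  rw [Nat.sub_self] at hc3'
  have hc3 := pin (a-1) (TH F n 0 n)
    (by linarith [hc3'.1])
    (by linarith [hc3'.2])
    (hsinl n (le_refl n))
  have hleftT := trap n (fun j => TH F n 0 (n-j)) (a-1)
    (by
      intro k hk
      have h2 : TH F n 0 (n-k) = TH F n 0 (n-(k+1)) + BB F n 0 (n-(k+1)) := by
        rw [show n - k = (n - (k+1)) + 1 by omega]
        exact TH_vert F n 0 (n-(k+1))
      rw [h2, show TH F n 0 (n-(k+1)) - (TH F n 0 (n-(k+1)) + BB F n 0 (n-(k+1)))
        = -(BB F n 0 (n-(k+1))) by ring, abs_neg]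
      exact hB 0 (n-(k+1)) (by omega) (by omega))
    (fun k hk => hsinl (n-k) (by omega))
    hc3
  -- final contradiction
  have hfin := hleftT n (le_refl n)
  rw [Nat.sub_self] at hfin
  have h1 : 2*(a:ℝ)*π - π < TH F n 0 0 + π/2 := ha.1
  have h2 : TH F n 0 0 < 2*((a:ℝ)-1)*π := by
    have := hfin.2; push_cast at this ⊢; linarith
  linarith

private lemma key_id (x y : ℝ) :
    Complex.exp (-(↑(π*(2*x-1)/8):ℂ) * Complex.I) * (3 * phi (psi (x,y)))
      = Complex.exp ((↑(π*(2*x-1)/8):ℂ) * Complex.I)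
        + 2 * (↑(Real.cos (3*π/4 - y*(π/2))) : ℂ) := by
  have hcos : (2:ℂ) * ↑(Real.cos (3*π/4 - y*(π/2)))
      = Complex.exp (↑(3*π/4 - y*(π/2)) * Complex.I)
        + Complex.exp (-↑(3*π/4 - y*(π/2)) * Complex.I) := by
    rw [Complex.ofReal_cos]
    show (2:ℂ) * ((Complex.exp (_ * Complex.I) + Complex.exp (-_ * Complex.I))/2) = _
    ring
  simp only [phi, psi]
  rw [show Complex.I * ((5*π/8 + x*(π/4) + y*(-(π/2)) : ℝ) : ℂ)
      = ↑(π*(2*x-1)/8) * Complex.I + ↑(3*π/4 - y*(π/2)) * Complex.I by push_cast; ring]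
  rw [show Complex.I * (((5*π/8 + x*(π/4) + y*(-(π/2)) : ℝ) : ℂ) + ((-(7*π/8) + x*(π/4) + y*(π/2) : ℝ):ℂ))
      = ↑(π*(2*x-1)/8) * Complex.I + ↑(π*(2*x-1)/8) * Complex.I by push_cast; ring]
  rw [show Complex.I * ((-(7*π/8) + x*(π/4) + y*(π/2) : ℝ) : ℂ)
      = ↑(π*(2*x-1)/8) * Complex.I + -↑(3*π/4 - y*(π/2)) * Complex.I by push_cast; ring]
  rw [Complex.exp_add, Complex.exp_add, Complex.exp_add, hcos]
  have ha : Complex.exp (-(↑(π*(2*x-1)/8):ℂ) * Complex.I) * Complex.exp ((↑(π*(2*x-1)/8):ℂ) * Complex.I) = 1 := by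
    rw [← Complex.exp_add]
    simp
  linear_combination (Complex.exp (↑(3*π/4 - y*(π/2)) * Complex.I)
    + Complex.exp (-↑(3*π/4 - y*(π/2)) * Complex.I)
    + Complex.exp ((↑(π*(2*x-1)/8):ℂ) * Complex.I)) * ha


private lemma sqrt2_gt : Real.sqrt 2 > 1.4 := by
  nlinarith [Real.sq_sqrt (show (0:ℝ) ≤ 2 by norm_num), Real.sqrt_nonneg 2]

private lemma sqrt2_lt : Real.sqrt 2 < 1.5 := by
  nlinarith [Real.sq_sqrt (show (0:ℝ) ≤ 2 by norm_num), Real.sqrt_nonneg 2]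

private lemma cos_3pi4 : Real.cos (3*π/4) = -(Real.sqrt 2/2) := by
  rw [show 3*π/4 = π - π/4 by ring, Real.cos_pi_sub, Real.cos_pi_div_four]

private lemma sin_pi8 : Real.sin (π/8) > 0.075 := by
  have hpi := Real.pi_pos
  have hsq : Real.sin (π/8)^2 = 1/2 - Real.sqrt 2/4 := by
    rw [Real.sin_sq_eq_half_sub, show 2*(π/8) = π/4 by ring, Real.cos_pi_div_four]
    ring
  have hpos : 0 < Real.sin (π/8) :=
    Real.sin_pos_of_pos_of_lt_pi (by positivity) (by linarith)
  nlinarith [sqrt2_lt]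

private lemma cos_pos_u (x : ℝ) (hx : x ∈ Set.Icc (0:ℝ) 1) : 0 < Real.cos (π*(2*x-1)/8) := by
  have hpi := Real.pi_pos
  obtain ⟨h0, h1⟩ := hx
  apply Real.cos_pos_of_mem_Ioo
  constructor <;> [nlinarith; nlinarith]

-- MAIN (assumes everything above)
/-- Every continuous `g` with `|g − φ| < 0.025` on `ψ([0,1]²)` has a zero in `ψ([0,1]²)`. -/
theorem exists_zero_in_psi_square (g : ℝ × ℝ → ℂ) (hg : Continuous g)
    (happrox : ∀ p ∈ psi '' (Set.Icc (0 : ℝ) 1 ×ˢ Set.Icc (0 : ℝ) 1),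
      ‖g p - phi p‖ < 0.025) :
    ∃ x₀ y₀ : ℝ, (x₀, y₀) ∈ Set.Icc (0 : ℝ) 1 ×ˢ Set.Icc (0 : ℝ) 1 ∧
      g (psi (x₀, y₀)) = 0 := by
  by_contra hcon
  push_neg at hcon
  have hpi := Real.pi_pos
  set F : ℝ×ℝ → ℂ := fun p =>
    Complex.exp (-(↑(π*(2*p.1-1)/8):ℂ) * Complex.I) * (3 * g (psi p)) with hFdef
  set Hh : ℝ×ℝ → ℂ := fun p =>
    Complex.exp ((↑(π*(2*p.1-1)/8):ℂ) * Complex.I)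
      + 2 * (↑(Real.cos (3*π/4 - p.2*(π/2))) : ℂ) with hHdef
  have hψ : Continuous psi := by unfold psi; fun_prop
  have hFc : Continuous F := by
    rw [hFdef]
    apply Continuous.mul
    · apply Complex.continuous_exp.comp
      fun_prop
    · exact continuous_const.mul (hg.comp hψ)
  have h0 : ∀ p ∈ Set.Icc (0:ℝ) 1 ×ˢ Set.Icc (0:ℝ) 1, F p ≠ 0 := by
    rintro ⟨x,y⟩ hp
    simp only [hFdef]
    exact mul_ne_zero (Complex.exp_ne_zero _)
      (mul_ne_zero (by norm_num) (hcon x y hp))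
  have happ : ∀ p ∈ Set.Icc (0:ℝ) 1 ×ˢ Set.Icc (0:ℝ) 1,
      ‖F p - Hh p‖ < 0.075 := by
    rintro ⟨x,y⟩ hp
    have h1 : F (x,y) - Hh (x,y)
        = Complex.exp (-(↑(π*(2*x-1)/8):ℂ) * Complex.I)
          * (3 * (g (psi (x,y)) - phi (psi (x,y)))) := by
      simp only [hFdef, hHdef]
      rw [← key_id x y]
      ring
    rw [h1, norm_mul, norm_mul]
    have he : ‖Complex.exp (-(↑(π*(2*x-1)/8):ℂ) * Complex.I)‖ = 1 := by
      rw [Complex.norm_exp]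
      simp [Complex.mul_re]
    rw [he, one_mul]
    have := happrox (psi (x,y)) (Set.mem_image_of_mem psi hp)
    have h3 : ‖(3:ℂ)‖ = 3 := by
      rw [show (3:ℂ) = ((3:ℝ):ℂ) by norm_num, Complex.norm_real]
      norm_num
    rw [h3]
    calc 3 * ‖g (psi (x,y)) - phi (psi (x,y))‖
        < 3 * 0.025 := by linarith
      _ = 0.075 := by norm_num
  have hre : ∀ p ∈ Set.Icc (0:ℝ) 1 ×ˢ Set.Icc (0:ℝ) 1,
      |(F p).re - (Hh p).re| < 0.075 ∧ |(F p).im - (Hh p).im| < 0.075 := by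
    intro p hp
    have h := happ p hp
    constructor
    · calc |(F p).re - (Hh p).re| = |(F p - Hh p).re| := by rw [Complex.sub_re]
        _ ≤ ‖F p - Hh p‖ := Complex.abs_re_le_norm _
        _ < 0.075 := h
    · calc |(F p).im - (Hh p).im| = |(F p - Hh p).im| := by rw [Complex.sub_im]
        _ ≤ ‖F p - Hh p‖ := Complex.abs_im_le_norm _
        _ < 0.075 := h
  have hHre : ∀ x y : ℝ, (Hh (x,y)).re
      = Real.cos (π*(2*x-1)/8) + 2*Real.cos (3*π/4 - y*(π/2)) := by
    intro x y
    rw [hHdef]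
    simp only [Complex.add_re, Complex.exp_ofReal_mul_I_re,
      show (2:ℂ) * ↑(Real.cos (3*π/4 - y*(π/2))) = ((2 * Real.cos (3*π/4 - y*(π/2)) : ℝ) : ℂ) by push_cast; ring,
      Complex.ofReal_re]
  have hHim : ∀ x y : ℝ, (Hh (x,y)).im = Real.sin (π*(2*x-1)/8) := by
    intro x y
    rw [hHdef]
    simp only [Complex.add_im, Complex.exp_ofReal_mul_I_im,
      show (2:ℂ) * ↑(Real.cos (3*π/4 - y*(π/2))) = ((2 * Real.cos (3*π/4 - y*(π/2)) : ℝ) : ℂ) by push_cast; ring,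
      Complex.ofReal_im, add_zero]
  have hmem0 : (0:ℝ) ∈ Set.Icc (0:ℝ) 1 := by norm_num
  have hmem1 : (1:ℝ) ∈ Set.Icc (0:ℝ) 1 := by norm_num
  exact miranda F hFc.continuousOn h0
    (by -- bottom
      intro x hx
      have h := (hre (x,0) ⟨hx, hmem0⟩).1
      rw [hHre x 0, show 3*π/4 - 0*(π/2) = 3*π/4 by ring, cos_3pi4] at h
      rw [abs_lt] at h
      have := Real.cos_le_one (π*(2*x-1)/8)
      have := sqrt2_gt
      linarith)
    (by -- top
      intro x hx
      have h := (hre (x,1) ⟨hx, hmem1⟩).1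
      rw [hHre x 1, show 3*π/4 - 1*(π/2) = π/4 by ring, Real.cos_pi_div_four] at h
      rw [abs_lt] at h
      have := cos_pos_u x hx
      have := sqrt2_gt
      linarith)
    (by -- left
      intro y hy
      have h := (hre (0,y) ⟨hmem0, hy⟩).2
      rw [hHim 0 y, show π*(2*0-1)/8 = -(π/8) by ring, Real.sin_neg] at h
      rw [abs_lt] at h
      have := sin_pi8
      linarith)
    (by -- right
      intro y hy
      have h := (hre (1,y) ⟨hmem1, hy⟩).2
      rw [hHim 1 y, show π*(2*1-1)/8 = π/8 by ring] at h
      rw [abs_lt] at h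
      have := sin_pi8
      linarith)
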